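/- Let (ρ*, x) be a unicycle on a ribbon graph G with m edges. If the rotor-routing process is iterated 2m times, then the chip traverses each edge of G exactly once in each direction, each rotor makes exactly one full turn, and the final unicycle equals (ρ*, x). -/

import Mathlib

open Finset

noncomputable section
open scoped Classical

/-- A finite multigraph without loops: each edge has an unordered pair of
distinct endpoints. -/
structure Multigraph (V E : Type) where
  ends : E → Sym2 V
  loopless : ∀ e, ¬ (ends e).IsDiag

/-- A ribbon structure: for each vertex, a "next edge" map describing the
cyclic ordering of the edges incident to that vertex. -/
structure RibbonStruct (V E : Type) where
  next : V → E → E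

/-- The group of degree-zero divisors on the vertex set `V`. -/
def Div0 (V : Type) [Fintype V] : AddSubgroup (V → ℤ) where
  carrier := {D | ∑ v, D v = 0}
  add_mem' := by
    intro a b ha hb
    simp only [Set.mem_setOf_eq, Pi.add_apply, Finset.sum_add_distrib] at *
    omega
  zero_mem' := by simp
  neg_mem' := by
    intro a ha
    simp only [Set.mem_setOf_eq, Pi.neg_apply, Finset.sum_neg_distrib] at *
    omega

/-- The divisor `c - s`. -/
def chipDiv {V : Type} [DecidableEq V] (c s : V) : V → ℤ :=
  fun v => (if v = c then 1 else 0) - (if v = s then 1 else 0)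

namespace Multigraph

variable {V E : Type} [Fintype V] [Fintype E] [DecidableEq V] [DecidableEq E]

/-- Two vertices are adjacent if they are the two endpoints of some edge. -/
def Adj (G : Multigraph V E) (x y : V) : Prop := ∃ e : E, G.ends e = s(x, y)

/-- A multigraph is connected if any two vertices are joined by a walk. -/
def Connected (G : Multigraph V E) : Prop := ∀ x y : V, Relation.ReflTransGen G.Adj x y

/-- Adjacency using only edges from the set `T`. -/
def AdjOn (G : Multigraph V E) (T : Finset E) (x y : V) : Prop := ∃ e ∈ T, G.ends e = s(x, y)

/-- Reachability using only edges from the set `T`. -/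
def ReachOn (G : Multigraph V E) (T : Finset E) (x y : V) : Prop :=
  Relation.ReflTransGen (G.AdjOn T) x y

/-- A spanning tree: a spanning connected edge set of the correct cardinality. -/
def IsSpanningTree (G : Multigraph V E) (T : Finset E) : Prop :=
  (∀ x y : V, G.ReachOn T x y) ∧ T.card = Fintype.card V - 1

/-- The degree of a vertex: the number of incident edges. -/
def degree (G : Multigraph V E) (v : V) : ℕ := (univ.filter fun e => v ∈ G.ends e).card

/-- The number of edges of `T` incident to `v`. -/
def treeDegree (G : Multigraph V E) (T : Finset E) (v : V) : ℕ :=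
  (T.filter fun e => v ∈ G.ends e).card

/-- A leaf vertex of `T`: incident to exactly one edge of `T`. -/
def IsLeafVertex (G : Multigraph V E) (T : Finset E) (v : V) : Prop := G.treeDegree T v = 1

/-- A leaf edge of `T`: an edge of `T` incident to a leaf vertex. -/
def IsLeafEdge (G : Multigraph V E) (T : Finset E) (e : E) : Prop :=
  e ∈ T ∧ ∃ v, v ∈ G.ends e ∧ G.IsLeafVertex T v

/-- Adjacency within `T` avoiding the vertex `x`. -/
def AdjOnAvoid (G : Multigraph V E) (T : Finset E) (x : V) (a b : V) : Prop :=
  G.AdjOn T a b ∧ a ≠ x ∧ b ≠ x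

/-- "The path in `T` from `a` to `r` passes through `y`": `a` cannot reach `r`
within `T` while avoiding the vertex `y`. -/
def PathThrough (G : Multigraph V E) (T : Finset E) (r a y : V) : Prop :=
  ¬ Relation.ReflTransGen (G.AdjOnAvoid T y) a r

/-- Adjacency in `G` avoiding the vertex `x`. -/
def AdjAvoid (G : Multigraph V E) (x : V) (a b : V) : Prop := G.Adj a b ∧ a ≠ x ∧ b ≠ x

/-- 2-connected: connected and with no cut vertices. -/
def TwoConnected (G : Multigraph V E) : Prop :=
  G.Connected ∧ ∀ x a b : V, a ≠ x → b ≠ x →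
    Relation.ReflTransGen (G.AdjAvoid x) a b

/-- The row of the Laplacian matrix of `G` corresponding to the vertex `v`
(the divisor obtained by "firing" the vertex `v`, negated). -/
def lapRow (G : Multigraph V E) (v : V) : V → ℤ := fun w =>
  if w = v then (G.degree v : ℤ) else -((univ.filter fun e => G.ends e = s(v, w)).card : ℤ)

/-- The subgroup of divisors generated by the rows of the Laplacian, i.e. the
integer image of the Laplacian. -/
def LapSubgroup (G : Multigraph V E) : AddSubgroup (V → ℤ) :=
  AddSubgroup.closure (Set.range G.lapRow)

/-- Two divisors are firing equivalent when their difference lies in the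
integer image of the Laplacian. -/
def FiringEquiv (G : Multigraph V E) (D D' : V → ℤ) : Prop := D - D' ∈ G.LapSubgroup

/-- The sandpile group (Picard group) `Pic⁰(G)`:
degree-zero divisors modulo the image of the Laplacian. -/
def Pic0 (G : Multigraph V E) : Type :=
  Div0 V ⧸ ((G.LapSubgroup).addSubgroupOf (Div0 V))

instance (G : Multigraph V E) : AddCommGroup G.Pic0 :=
  QuotientAddGroup.Quotient.addCommGroup _

/-- The class in `Pic⁰(G)` of a degree-zero divisor. -/
def picClass (G : Multigraph V E) (D : V → ℤ) (hD : D ∈ Div0 V) : G.Pic0 :=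
  QuotientAddGroup.mk ⟨D, hD⟩

/-- `cfg` is the rotor configuration of the tree `T` with sink `s` (each
non-sink vertex carries the first edge of `T` on its path to `s`). -/
def IsRotorCfg (G : Multigraph V E) (s : V) (T : Finset E) (cfg : V → E) : Prop :=
  ∀ v, v ≠ s → cfg v ∈ T ∧ v ∈ G.ends (cfg v) ∧ ¬ G.ReachOn (T.erase (cfg v)) v s

/-- One step along the rotors of `cfg` (with sink `s`):
from `a ≠ s` across the rotor at `a` to its other endpoint `b`. -/
def RotorStep (G : Multigraph V E) (s : V) (cfg : V → E) (a b : V) : Prop :=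
  a ≠ s ∧ G.ends (cfg a) = s(a, b)

/-- A rotor configuration is acyclic: following rotors never returns to a
starting vertex. -/
def RotorAcyclic (G : Multigraph V E) (s : V) (cfg : V → E) : Prop :=
  ∀ a : V, ¬ Relation.TransGen (G.RotorStep s cfg) a a

/-- One step of the single-chip rotor-routing process: the state is a pair
(rotor configuration, chip position); the rotor at the chip's position is
rotated one step in the cyclic order `χ`, and the chip then moves across the
new rotor. -/
def RRStep (G : Multigraph V E) (χ : RibbonStruct V E) (p q : (V → E) × V) : Prop :=
  q.1 = Function.update p.1 p.2 (χ.next p.2 (p.1 p.2)) ∧ G.ends (q.1 p.2) = s(p.2, q.2)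

/-- A run of length `n` of the rotor-routing algorithm with sink `s`. -/
def IsRun (G : Multigraph V E) (χ : RibbonStruct V E) (s : V)
    (σ : ℕ → (V → E) × V) (n : ℕ) : Prop :=
  ∀ i, i < n → (σ i).2 ≠ s ∧ G.RRStep χ (σ i) (σ i.succ)

/-- At step `i` of the run `σ`, the chip crosses the edge `e` from `u` to `w`. -/
def Crosses (G : Multigraph V E) (σ : ℕ → (V → E) × V) (i : ℕ) (e : E) (u w : V) : Prop :=
  (σ i).2 = u ∧ (σ (i + 1)).2 = w ∧ (σ (i + 1)).1 u = e ∧ G.ends e = s(u, w)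

/-- A dart of `G`: an edge together with a chosen head. -/
def Dart (G : Multigraph V E) : Type := {p : E × V // p.2 ∈ G.ends p.1}

/-- The "next dart along a face" relation determined by the ribbon structure. -/
def FaceRel (G : Multigraph V E) (χ : RibbonStruct V E) (a b : G.Dart) : Prop :=
  b.1.1 = χ.next a.1.2 a.1.1 ∧ G.ends b.1.1 = s(a.1.2, b.1.2)

/-- The number of faces of the ribbon graph `(G, χ)`: the number of orbits of
the face map on darts. -/
def numFaces (G : Multigraph V E) (χ : RibbonStruct V E) : ℕ :=
  Nat.card (Quot (G.FaceRel χ))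

end Multigraph

/-- The axioms making `χ` an honest ribbon structure on `G`: at each vertex,
`next` is a bijection preserving the incident edges and acting transitively
(i.e. cyclically) on them. -/
def RibbonStruct.IsRibbon {V E : Type} [Fintype V] [Fintype E]
    (χ : RibbonStruct V E) (G : Multigraph V E) : Prop :=
  (∀ v : V, Function.Bijective (χ.next v)) ∧
  (∀ v e, v ∈ G.ends e → v ∈ G.ends (χ.next v e)) ∧
  (∀ v e f, v ∈ G.ends e → v ∈ G.ends f → ∃ m : ℕ, (χ.next v)^[m] e = f)

/-- A plane graph: a connected ribbon graph of genus 0 (Euler's formula). -/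
def Multigraph.IsPlane {V E : Type} [Fintype V] [Fintype E] [DecidableEq V] [DecidableEq E]
    (G : Multigraph V E) (χ : RibbonStruct V E) : Prop :=
  G.Connected ∧ χ.IsRibbon G ∧
    Fintype.card V + G.numFaces χ = Fintype.card E + 2

/-- An isomorphism of ribbon graphs: a pair of bijections on vertices and
edges preserving incidence and the cyclic orderings. -/
def IsRibbonIso {V E V' E' : Type}
    (G : Multigraph V E) (χ : RibbonStruct V E)
    (G' : Multigraph V' E') (χ' : RibbonStruct V' E')
    (φV : V ≃ V') (φE : E ≃ E') : Prop :=
  (∀ e, G'.ends (φE e) = (G.ends e).map φV) ∧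
  ∀ v e, v ∈ G.ends e → φE (χ.next v e) = χ'.next (φV v) (φE e)


/-- A sink-free rotor configuration: every vertex carries an incident edge. -/
def SinkFree {V E : Type} (G : Multigraph V E) (cfg : V → E) : Prop :=
  ∀ v, v ∈ G.ends (cfg v)

/-- One step along the rotors of a sink-free configuration. -/
def SStep {V E : Type} (G : Multigraph V E) (cfg : V → E) (a b : V) : Prop :=
  G.ends (cfg a) = s(a, b)

/-- `v` lies on a directed cycle of the rotors of `cfg`. -/
def OnRotorCycle {V E : Type} (G : Multigraph V E) (cfg : V → E) (v : V) : Prop :=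
  Relation.TransGen (SStep G cfg) v v

/-- `(cfg, x)` is a unicycle: a sink-free rotor configuration with exactly one
directed cycle, and `x` a vertex on that cycle. -/
def IsUnicycle {V E : Type} (G : Multigraph V E) (cfg : V → E) (x : V) : Prop :=
  SinkFree G cfg ∧ OnRotorCycle G cfg x ∧
    ∀ u v, OnRotorCycle G cfg u → OnRotorCycle G cfg v →
      Relation.ReflTransGen (SStep G cfg) u v

set_option linter.unusedSectionVars false

namespace URHelp

open Finset Function

variable {V E : Type} [Fintype V] [Fintype E] [DecidableEq V] [DecidableEq E]

lemma sym2_exists (z : Sym2 V) : ∃ a b : V, z = s(a, b) := by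
  induction z using Sym2.ind with
  | _ a b => exact ⟨a, b, rfl⟩

lemma ends_card_two (G : Multigraph V E) (e : E) :
    (univ.filter fun v => v ∈ G.ends e).card = 2 := by
  obtain ⟨a, b, hab⟩ := sym2_exists (G.ends e)
  have hne : a ≠ b := by
    intro h; exact G.loopless e (by rw [hab, h]; exact Sym2.mk_isDiag_iff.2 rfl)
  have : (univ.filter fun v => v ∈ G.ends e) = {a, b} := by
    ext v
    simp [hab, Sym2.mem_iff]
  rw [this, card_insert_of_notMem (by simp [hne]), card_singleton]

lemma sum_degree (G : Multigraph V E) : ∑ v, G.degree v = 2 * Fintype.card E := by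
  unfold Multigraph.degree
  have h1 : ∀ v : V, (univ.filter fun e => v ∈ G.ends e).card
      = ∑ e : E, if v ∈ G.ends e then 1 else 0 := by
    intro v; rw [Finset.card_filter]
  have h2 : ∀ e : E, (univ.filter fun v => v ∈ G.ends e).card
      = ∑ v : V, if v ∈ G.ends e then 1 else 0 := by
    intro e; rw [Finset.card_filter]
  calc ∑ v, (univ.filter fun e => v ∈ G.ends e).card
      = ∑ v : V, ∑ e : E, if v ∈ G.ends e then 1 else 0 := by simp_rw [h1]
    _ = ∑ e : E, ∑ v : V, if v ∈ G.ends e then 1 else 0 := Finset.sum_comm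
    _ = ∑ e : E, 2 := by
        refine Finset.sum_congr rfl fun e _ => ?_
        rw [← h2, ends_card_two]
    _ = 2 * Fintype.card E := by simp [Finset.card_univ, mul_comm]

variable {G : Multigraph V E} {χ : RibbonStruct V E}

lemma iterate_incident (hrib : χ.IsRibbon G) {v : V} {e : E} (he : v ∈ G.ends e) (k : ℕ) :
    v ∈ G.ends ((χ.next v)^[k] e) := by
  induction k with
  | zero => exact he
  | succ k ih => rw [Function.iterate_succ_apply']; exact hrib.2.1 v _ ih

lemma minimalPeriod_eq_degree (hrib : χ.IsRibbon G) {v : V} {e : E} (he : v ∈ G.ends e) :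
    Function.minimalPeriod (χ.next v) e = G.degree v := by
  set f := χ.next v with hf
  have hinj : Function.Injective f := (hrib.1 v).injective
  have hper : e ∈ Function.periodicPts f := by
    obtain ⟨a, b, hne, heq⟩ :=
      Finite.exists_ne_map_eq_of_infinite (fun k : ℕ => f^[k] e)
    rcases Ne.lt_or_gt hne with hab | hab
    · refine Function.mk_mem_periodicPts (n := b - a) (by omega) ?_
      have h1 : f^[a + (b - a)] e = f^[a] e := by
        rw [show a + (b - a) = b by omega]; exact heq.symm
      rw [Function.iterate_add_apply] at h1
      exact hinj.iterate a h1
    · refine Function.mk_mem_periodicPts (n := a - b) (by omega) ?_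
      have h1 : f^[b + (a - b)] e = f^[b] e := by
        rw [show b + (a - b) = a by omega]; exact heq
      rw [Function.iterate_add_apply] at h1
      exact hinj.iterate b h1
  have hp : 0 < Function.minimalPeriod f e :=
    Function.minimalPeriod_pos_of_mem_periodicPts hper
  have hset : (univ.filter fun g => v ∈ G.ends g)
      = (range (Function.minimalPeriod f e)).image (fun k => f^[k] e) := by
    ext g
    simp only [mem_filter, mem_image, mem_range, mem_univ, true_and]
    constructor
    · intro hg
      obtain ⟨k, hk⟩ := hrib.2.2 v e g he hg
      exact ⟨k % Function.minimalPeriod f e, Nat.mod_lt _ hp,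
        by rw [Function.iterate_mod_minimalPeriod_eq]; exact hk⟩
    · rintro ⟨k, -, rfl⟩; exact iterate_incident hrib he k
  have hcard : ((range (Function.minimalPeriod f e)).image (fun k => f^[k] e)).card
      = Function.minimalPeriod f e := by
    rw [Finset.card_image_of_injOn, card_range]
    intro a ha b hb hab
    exact Function.iterate_injOn_Iio_minimalPeriod
      (by simpa using ha) (by simpa using hb) hab
  unfold Multigraph.degree
  rw [hset, hcard]

lemma iterate_degree (hrib : χ.IsRibbon G) {v : V} {e : E} (he : v ∈ G.ends e) :
    (χ.next v)^[G.degree v] e = e := by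
  rw [← minimalPeriod_eq_degree hrib he]
  exact Function.iterate_minimalPeriod

lemma degree_dvd (hrib : χ.IsRibbon G) {v : V} {e : E} (he : v ∈ G.ends e) {k : ℕ}
    (h : (χ.next v)^[k] e = e) : G.degree v ∣ k := by
  rw [← minimalPeriod_eq_degree hrib he]
  exact Function.IsPeriodicPt.minimalPeriod_dvd h

section WalkHelpers

variable {σ : ℕ → (V → E) × V} {N : ℕ}

lemma cnt_succ (σ : ℕ → (V → E) × V) (v : V) (n : ℕ) :
    ((range (n+1)).filter fun j => (σ j).2 = v).card
      = ((range n).filter fun j => (σ j).2 = v).card + (if (σ n).2 = v then 1 else 0) := by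
  rw [Finset.range_add_one, Finset.filter_insert]
  split_ifs with h
  · rw [Finset.card_insert_of_notMem (by simp)]
  · simp

lemma ent_succ (σ : ℕ → (V → E) × V) (v : V) (n : ℕ) :
    ((range (n+1)).filter fun j => (σ (j+1)).2 = v).card
      = ((range n).filter fun j => (σ (j+1)).2 = v).card + (if (σ (n+1)).2 = v then 1 else 0) := by
  rw [Finset.range_add_one, Finset.filter_insert]
  split_ifs with h
  · rw [Finset.card_insert_of_notMem (by simp)]
  · simp

lemma cnt_mono (σ : ℕ → (V → E) × V) (v : V) {a b : ℕ} (h : a ≤ b) :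
    ((range a).filter fun j => (σ j).2 = v).card
      ≤ ((range b).filter fun j => (σ j).2 = v).card :=
  Finset.card_le_card (Finset.filter_subset_filter _ (Finset.range_subset_range.2 h))

lemma balance (σ : ℕ → (V → E) × V) (v : V) (n : ℕ) :
    ((range n).filter fun j => (σ j).2 = v).card + (if (σ n).2 = v then 1 else 0)
      = ((range n).filter fun j => (σ (j+1)).2 = v).card + (if (σ 0).2 = v then 1 else 0) := by
  induction n with
  | zero => simp
  | succ n ih =>
    rw [cnt_succ, ent_succ]
    split_ifs at ih ⊢ <;> omega

lemma ent_le (hends : ∀ i, i < N → G.ends ((σ (i+1)).1 ((σ i).2)) = s((σ i).2, (σ (i+1)).2))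
    {n : ℕ} (hnN : n ≤ N)
    (hinj : ∀ s t, s < t → t < n → (σ (s+1)).1 ((σ s).2) = (σ (t+1)).1 ((σ t).2) →
      (σ (s+1)).2 = (σ (t+1)).2 → False)
    (v : V) :
    ((range n).filter fun j => (σ (j+1)).2 = v).card ≤ G.degree v := by
  unfold Multigraph.degree
  refine Finset.card_le_card_of_injOn (fun j => (σ (j+1)).1 ((σ j).2)) ?_ ?_
  · intro j hj
    simp only [Finset.mem_coe, mem_filter, mem_range] at hj
    simp only [Finset.mem_coe, mem_filter, mem_univ, true_and]
    rw [hends j (by omega), ← hj.2]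
    exact Sym2.mem_mk_right _ _
  · intro a ha b hb hab
    simp only [coe_filter, Set.mem_setOf_eq, mem_range] at ha hb
    rcases Nat.lt_trichotomy a b with h | h | h
    · exact absurd (hinj a b h hb.1 hab (ha.2.trans hb.2.symm)) not_false
    · exact h
    · exact absurd (hinj b a h ha.1 hab.symm (hb.2.trans ha.2.symm)) not_false

lemma ent_le_sub (hends : ∀ i, i < N → G.ends ((σ (i+1)).1 ((σ i).2)) = s((σ i).2, (σ (i+1)).2))
    {n : ℕ} (hnN : n ≤ N)
    (hinj : ∀ s t, s < t → t < n → (σ (s+1)).1 ((σ s).2) = (σ (t+1)).1 ((σ t).2) →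
      (σ (s+1)).2 = (σ (t+1)).2 → False)
    (u v : V) (g : E) (hg : G.ends g = s(u, v))
    (hunused : ∀ j, j < n → (σ (j+1)).1 ((σ j).2) = g → (σ (j+1)).2 = v → False) :
    ((range n).filter fun j => (σ (j+1)).2 = v).card ≤ G.degree v - 1 := by
  have hgmem : g ∈ univ.filter fun e => v ∈ G.ends e := by
    simp only [mem_filter, mem_univ, true_and]
    rw [hg]; exact Sym2.mem_mk_right _ _
  have hcard : ((univ.filter fun e => v ∈ G.ends e).erase g).card = G.degree v - 1 := by
    rw [Finset.card_erase_of_mem hgmem]; rfl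
  rw [← hcard]
  refine Finset.card_le_card_of_injOn (fun j => (σ (j+1)).1 ((σ j).2)) ?_ ?_
  · intro j hj
    simp only [Finset.mem_coe, mem_filter, mem_range] at hj
    refine Finset.mem_coe.2 (Finset.mem_erase.2 ⟨fun hEj => hunused j hj.1 hEj hj.2, ?_⟩)
    simp only [mem_filter, mem_univ, true_and]
    rw [hends j (by omega), ← hj.2]
    exact Sym2.mem_mk_right _ _
  · intro a ha b hb hab
    simp only [coe_filter, Set.mem_setOf_eq, mem_range] at ha hb
    rcases Nat.lt_trichotomy a b with h | h | h
    · exact absurd (hinj a b h hb.1 hab (ha.2.trans hb.2.symm)) not_false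
    · exact h
    · exact absurd (hinj b a h ha.1 hab.symm (hb.2.trans ha.2.symm)) not_false

lemma cnt_le (hends : ∀ i, i < N → G.ends ((σ (i+1)).1 ((σ i).2)) = s((σ i).2, (σ (i+1)).2))
    {n : ℕ} (hnN : n ≤ N)
    (hinj : ∀ s t, s < t → t < n → (σ (s+1)).1 ((σ s).2) = (σ (t+1)).1 ((σ t).2) →
      (σ (s+1)).2 = (σ (t+1)).2 → False)
    (v : V) :
    ((range n).filter fun j => (σ j).2 = v).card ≤ G.degree v := by
  unfold Multigraph.degree
  refine Finset.card_le_card_of_injOn (fun j => (σ (j+1)).1 ((σ j).2)) ?_ ?_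
  · intro j hj
    simp only [Finset.mem_coe, mem_filter, mem_range] at hj
    simp only [Finset.mem_coe, mem_filter, mem_univ, true_and]
    rw [hends j (by omega), ← hj.2]
    exact Sym2.mem_mk_left _ _
  · intro a ha b hb hab
    simp only [coe_filter, Set.mem_setOf_eq, mem_range] at ha hb
    have hab' : (σ (a+1)).1 (σ a).2 = (σ (b+1)).1 (σ b).2 := hab
    have hA := hends a (by omega)
    have hB := hends b (by omega)
    rw [hab'] at hA
    have hAB : s((σ a).2, (σ (a+1)).2) = s((σ b).2, (σ (b+1)).2) := hA.symm.trans hB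
    rw [ha.2, hb.2] at hAB
    have hheads : (σ (a+1)).2 = (σ (b+1)).2 := Sym2.congr_right.mp hAB
    rcases Nat.lt_trichotomy a b with h | h | h
    · exact absurd (hinj a b h hb.1 hab' hheads) not_false
    · exact h
    · exact absurd (hinj b a h ha.1 hab'.symm hheads.symm) not_false

end WalkHelpers

end URHelp


/-- iterating the rotor-routing process `2|E|` times starting
from a unicycle traverses each edge exactly once in each direction, turns
every rotor exactly one full turn, and returns to the starting unicycle. -/
theorem unicycle_full_period
    {V E : Type} [Fintype V] [Fintype E] [DecidableEq V] [DecidableEq E]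
    (G : Multigraph V E) (χ : RibbonStruct V E) (hrib : χ.IsRibbon G)
    (hG : G.Connected) (σ : ℕ → (V → E) × V)
    (huni : IsUnicycle G (σ 0).1 (σ 0).2)
    (hstep : ∀ i, i < 2 * Fintype.card E → G.RRStep χ (σ i) (σ i.succ)) :
    σ (2 * Fintype.card E) = σ 0 ∧
    (∀ (e : E) (u w : V), G.ends e = s(u, w) →
      ∃! i : ℕ, i < 2 * Fintype.card E ∧ G.Crosses σ i e u w) ∧
    (∀ v : V, ((Finset.range (2 * Fintype.card E)).filter fun i => (σ i).2 = v).card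
        = G.degree v) := by
  classical
  set N := 2 * Fintype.card E with hN
  have hupd : ∀ i, i < N → (σ (i+1)).1
      = Function.update (σ i).1 (σ i).2 (χ.next (σ i).2 ((σ i).1 (σ i).2)) :=
    fun i hi => (hstep i hi).1
  have hends : ∀ i, i < N → G.ends ((σ (i+1)).1 ((σ i).2)) = s((σ i).2, (σ (i+1)).2) :=
    fun i hi => (hstep i hi).2
  have hrotor : ∀ i, i ≤ N → ∀ v, (σ i).1 v
      = (χ.next v)^[((range i).filter fun j => (σ j).2 = v).card] ((σ 0).1 v) := by
    intro i
    induction i with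
    | zero => intro _ v; simp
    | succ i ih =>
      intro hi v
      have hi' : i < N := by omega
      rw [URHelp.cnt_succ, hupd i hi']
      by_cases hv : (σ i).2 = v
      · rw [← hv, Function.update_self, ih (by omega) ((σ i).2), if_pos rfl,
          Function.iterate_succ_apply']
      · rw [Function.update_of_ne (show v ≠ (σ i).2 from fun h => hv h.symm),
          ih (by omega) v, if_neg hv, Nat.add_zero]
  have hedge : ∀ i, i < N → (σ (i+1)).1 ((σ i).2)
      = (χ.next (σ i).2)^[(((range i).filter fun j => (σ j).2 = (σ i).2).card) + 1]
          ((σ 0).1 ((σ i).2)) := by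
    intro i hi
    rw [hupd i hi, Function.update_self, hrotor i (le_of_lt hi) ((σ i).2),
      Function.iterate_succ_apply']
  -- The key claim: no dart is traversed twice in the first N steps.
  have keyinj : ∀ s t, s < t → t < N →
      (σ (s+1)).1 ((σ s).2) = (σ (t+1)).1 ((σ t).2) → (σ (s+1)).2 = (σ (t+1)).2 → False := by
    intro s0 t0 hst0 ht0 hE0 hH0
    have hex : ∃ t, t < N ∧ ∃ s, s < t ∧ (σ (s+1)).1 ((σ s).2) = (σ (t+1)).1 ((σ t).2)
        ∧ (σ (s+1)).2 = (σ (t+1)).2 := ⟨t0, ht0, s0, hst0, hE0, hH0⟩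
    obtain ⟨t2, ⟨ht2N, t1, ht12, hE, hH⟩, hmin0⟩ :
        ∃ t2, (t2 < N ∧ ∃ s, s < t2 ∧ (σ (s+1)).1 ((σ s).2) = (σ (t2+1)).1 ((σ t2).2)
          ∧ (σ (s+1)).2 = (σ (t2+1)).2) ∧
          ∀ t, t < t2 → ¬(t < N ∧ ∃ s, s < t ∧ (σ (s+1)).1 ((σ s).2) = (σ (t+1)).1 ((σ t).2)
            ∧ (σ (s+1)).2 = (σ (t+1)).2) :=
      ⟨Nat.find hex, Nat.find_spec hex, fun t ht => Nat.find_min hex ht⟩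
    have hmin : ∀ s t, s < t → t < t2 →
        (σ (s+1)).1 ((σ s).2) = (σ (t+1)).1 ((σ t).2) → (σ (s+1)).2 = (σ (t+1)).2 → False := by
      intro s t hst ht hE' hH'
      exact hmin0 t ht ⟨by omega, s, hst, hE', hH'⟩
    have ht1N : t1 < N := by omega
    -- the two traversals have the same tail
    have hv : (σ t1).2 = (σ t2).2 := by
      have h1 := hends t1 ht1N
      have h2 := hends t2 ht2N
      rw [hE, hH, h2] at h1
      exact Sym2.congr_left.mp h1.symm
    -- the rotor at the common tail made a full turn
    have hincv : (σ t2).2 ∈ G.ends ((σ 0).1 ((σ t2).2)) := huni.1 ((σ t2).2)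
    have hc12 : ((range t1).filter fun j => (σ j).2 = (σ t2).2).card
        < ((range t2).filter fun j => (σ j).2 = (σ t2).2).card := by
      have h1 := URHelp.cnt_succ σ ((σ t2).2) t1
      rw [if_pos hv] at h1
      have h2 := URHelp.cnt_mono σ ((σ t2).2) (show t1+1 ≤ t2 by omega)
      omega
    have hiter : (χ.next ((σ t2).2))^[(((range t1).filter fun j => (σ j).2 = (σ t2).2).card) + 1]
          ((σ 0).1 ((σ t2).2))
        = (χ.next ((σ t2).2))^[(((range t2).filter fun j => (σ j).2 = (σ t2).2).card) + 1]
          ((σ 0).1 ((σ t2).2)) := by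
      have h1 := hedge t1 ht1N
      have h2 := hedge t2 ht2N
      have hE' := hE
      rw [hv] at h1 hE'
      rw [← h1, ← h2]
      exact hE'
    have hdegle : G.degree ((σ t2).2)
        ≤ ((range t2).filter fun j => (σ j).2 = (σ t2).2).card := by
      set c1 := ((range t1).filter fun j => (σ j).2 = (σ t2).2).card with hc1
      set c2 := ((range t2).filter fun j => (σ j).2 = (σ t2).2).card with hc2
      have h1 : (χ.next ((σ t2).2))^[(c2 - c1) + (c1 + 1)] ((σ 0).1 ((σ t2).2))
          = (χ.next ((σ t2).2))^[c1 + 1] ((σ 0).1 ((σ t2).2)) := by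
        rw [show (c2 - c1) + (c1+1) = c2 + 1 by omega]
        exact hiter.symm
      rw [Function.iterate_add_apply] at h1
      have hdvd := URHelp.degree_dvd hrib
        (URHelp.iterate_incident hrib hincv (c1+1)) h1
      have := Nat.le_of_dvd (by omega) hdvd
      omega
    -- entries into the tail vertex are bounded by the degree
    have hentv := URHelp.ent_le hends (le_of_lt ht2N) hmin ((σ t2).2)
    -- hence the chip started at the tail vertex
    have hbalv := URHelp.balance σ ((σ t2).2) t2
    rw [if_pos rfl] at hbalv
    have hx0 : (σ 0).2 = (σ t2).2 := by
      by_contra hx0ne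
      rw [if_neg hx0ne] at hbalv
      omega
    -- hence exits and entries coincide at every vertex
    have hbal' : ∀ u, ((range t2).filter fun j => (σ j).2 = u).card
        = ((range t2).filter fun j => (σ (j+1)).2 = u).card := by
      intro u
      have hb := URHelp.balance σ u t2
      rw [hx0] at hb
      split_ifs at hb <;> omega
    -- vertices that have not completed a full turn are closed under rotor steps
    have hclosed : ∀ u u', SStep G ((σ 0).1) u u' →
        ((range t2).filter fun j => (σ j).2 = u).card < G.degree u →
        ((range t2).filter fun j => (σ j).2 = u').card < G.degree u' := by
      intro u u' hss hPu
      have hgu : G.ends ((σ 0).1 u) = s(u, u') := hss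
      have hu'mem : u' ∈ G.ends ((σ 0).1 u) := by rw [hgu]; exact Sym2.mem_mk_right _ _
      have hdegpos : 0 < G.degree u' := by
        have hne : (univ.filter fun e => u' ∈ G.ends e).Nonempty :=
          ⟨(σ 0).1 u, Finset.mem_filter.2 ⟨Finset.mem_univ _, hu'mem⟩⟩
        unfold Multigraph.degree
        exact Finset.card_pos.2 hne
      have hunused : ∀ j, j < t2 → (σ (j+1)).1 ((σ j).2) = (σ 0).1 u →
          (σ (j+1)).2 = u' → False := by
        intro j hj hEj hHj
        have hjN : j < N := by omega
        have h1 := hends j hjN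
        rw [hEj, hHj] at h1
        have htail : (σ j).2 = u := Sym2.congr_left.mp (h1.symm.trans hgu)
        have h2 := hedge j hjN
        rw [hEj, htail] at h2
        have hdvd := URHelp.degree_dvd hrib (huni.1 u) h2.symm
        have hdle := Nat.le_of_dvd (by omega) hdvd
        have h3 := URHelp.cnt_succ σ u j
        rw [if_pos htail] at h3
        have h4 := URHelp.cnt_mono σ u (show j+1 ≤ t2 by omega)
        omega
      have hentu' := URHelp.ent_le_sub hends (le_of_lt ht2N) hmin u u' ((σ 0).1 u) hgu hunused
      rw [hbal' u']
      omega
    -- every vertex completes exactly one full turn before time t2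
    have hallfull : ∀ u, ((range t2).filter fun j => (σ j).2 = u).card = G.degree u := by
      intro u
      have hle : ((range t2).filter fun j => (σ j).2 = u).card ≤ G.degree u := by
        rw [hbal' u]
        exact URHelp.ent_le hends (le_of_lt ht2N) hmin u
      by_contra hne
      have hPu : ((range t2).filter fun j => (σ j).2 = u).card < G.degree u :=
        lt_of_le_of_ne hle hne
      set r : V → V := fun z => Sym2.Mem.other' (huni.1 z) with hrdef
      have hstepr : ∀ z, SStep G ((σ 0).1) z (r z) := fun z =>
        (Sym2.other_spec' (huni.1 z)).symm
      have hPiter : ∀ k, ((range t2).filter fun j => (σ j).2 = (r^[k] u)).card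
          < G.degree (r^[k] u) := by
        intro k
        induction k with
        | zero => exact hPu
        | succ k ih =>
          rw [Function.iterate_succ_apply']
          exact hclosed _ _ (hstepr _) ih
      have htg : ∀ (w : V) (p : ℕ), Relation.TransGen (SStep G ((σ 0).1)) w (r^[p+1] w) := by
        intro w p
        induction p with
        | zero => simpa using Relation.TransGen.single (hstepr w)
        | succ p ih =>
          rw [Function.iterate_succ_apply']
          exact ih.tail (hstepr _)
      obtain ⟨a, b, hne2, heq⟩ := Finite.exists_ne_map_eq_of_infinite (fun k : ℕ => r^[k] u)
      have heq' : r^[a] u = r^[b] u := heq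
      have hcycex : ∃ k : ℕ, Relation.TransGen (SStep G ((σ 0).1)) (r^[k] u) (r^[k] u) := by
        rcases Ne.lt_or_gt hne2 with h | h
        · refine ⟨a, ?_⟩
          have hw : r^[(b-a-1)+1] (r^[a] u) = r^[a] u := by
            rw [← Function.iterate_add_apply, show (b-a-1)+1+a = b by omega]
            exact heq'.symm
          have := htg (r^[a] u) (b-a-1)
          rwa [hw] at this
        · refine ⟨b, ?_⟩
          have hw : r^[(a-b-1)+1] (r^[b] u) = r^[b] u := by
            rw [← Function.iterate_add_apply, show (a-b-1)+1+b = a by omega]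
            exact heq'
          have := htg (r^[b] u) (a-b-1)
          rwa [hw] at this
      obtain ⟨k, hcyc⟩ := hcycex
      have hreach : Relation.ReflTransGen (SStep G ((σ 0).1)) (r^[k] u) ((σ 0).2) :=
        huni.2.2 (r^[k] u) ((σ 0).2) hcyc huni.2.1
      have hPz : ∀ z, Relation.ReflTransGen (SStep G ((σ 0).1)) (r^[k] u) z →
          ((range t2).filter fun j => (σ j).2 = z).card < G.degree z := by
        intro z hz
        induction hz with
        | refl => exact hPiter k
        | tail h1 h2 ih => exact hclosed _ _ h2 ih
      have hfin := hPz ((σ 0).2) hreach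
      rw [hx0] at hfin
      omega
    -- summing over vertices: t2 = 2|E|, contradiction
    have hsum : t2 = ∑ u : V, ((range t2).filter fun j => (σ j).2 = u).card := by
      have h := Finset.card_eq_sum_card_fiberwise
        (s := range t2) (t := univ) (f := fun j => (σ j).2) (fun y _ => Finset.mem_univ _)
      rwa [Finset.card_range] at h
    have hdegurs := URHelp.sum_degree G
    have : t2 = N := by
      rw [hsum, Finset.sum_congr rfl fun u _ => hallfull u, hdegurs, hN]
    omega
  -- counts of visits
  have hcnteq : ∀ v, ((range N).filter fun j => (σ j).2 = v).card = G.degree v := by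
    have hle : ∀ v ∈ (univ : Finset V),
        ((range N).filter fun j => (σ j).2 = v).card ≤ G.degree v :=
      fun v _ => URHelp.cnt_le hends le_rfl keyinj v
    have hsum1 : ∑ v : V, ((range N).filter fun j => (σ j).2 = v).card = N := by
      have h := Finset.card_eq_sum_card_fiberwise
        (s := range N) (t := univ) (f := fun j => (σ j).2) (fun y _ => Finset.mem_univ _)
      rw [Finset.card_range] at h
      exact h.symm
    have hsum2 : ∑ v : V, G.degree v = N := by rw [URHelp.sum_degree G, hN]
    have hall := (Finset.sum_eq_sum_iff_of_le hle).1 (by rw [hsum1, hsum2])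
    intro v
    exact hall v (Finset.mem_univ v)
  have hentle : ∀ v, ((range N).filter fun j => (σ (j+1)).2 = v).card ≤ G.degree v :=
    fun v => URHelp.ent_le hends le_rfl keyinj v
  -- the chip returns to its starting point
  have hchip : (σ 0).2 = (σ N).2 := by
    have hb := URHelp.balance σ ((σ N).2) N
    rw [if_pos rfl, hcnteq] at hb
    by_contra hne
    rw [if_neg hne] at hb
    have := hentle ((σ N).2)
    omega
  have hcfg : (σ N).1 = (σ 0).1 := by
    funext v
    rw [hrotor N le_rfl v, hcnteq v]
    exact URHelp.iterate_degree hrib (huni.1 v)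
  refine ⟨Prod.ext_iff.2 ⟨hcfg, hchip.symm⟩, ?_, fun v => hcnteq v⟩
  -- each dart is crossed exactly once
  intro e u w hew
  have himg : ((range N).filter fun j => (σ j).2 = u).image (fun j => (σ (j+1)).1 ((σ j).2))
      = univ.filter fun g => u ∈ G.ends g := by
    apply Finset.eq_of_subset_of_card_le
    · intro g hg
      simp only [Finset.mem_image, Finset.mem_filter, Finset.mem_range] at hg
      obtain ⟨j, ⟨hj, hxj⟩, rfl⟩ := hg
      simp only [Finset.mem_filter, Finset.mem_univ, true_and]
      rw [hends j hj, ← hxj]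
      exact Sym2.mem_mk_left _ _
    · have hinjON : Set.InjOn (fun j => (σ (j+1)).1 ((σ j).2))
          ((range N).filter fun j => (σ j).2 = u) := by
        intro a ha b hb hab
        simp only [Finset.coe_filter, Set.mem_setOf_eq, Finset.mem_range] at ha hb
        have hab' : (σ (a+1)).1 ((σ a).2) = (σ (b+1)).1 ((σ b).2) := hab
        have hA := hends a ha.1
        have hB := hends b hb.1
        rw [hab'] at hA
        have hAB : s((σ a).2, (σ (a+1)).2) = s((σ b).2, (σ (b+1)).2) := hA.symm.trans hB
        rw [ha.2, hb.2] at hAB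
        have hheads : (σ (a+1)).2 = (σ (b+1)).2 := Sym2.congr_right.mp hAB
        rcases Nat.lt_trichotomy a b with h | h | h
        · exact absurd (keyinj a b h hb.1 hab' hheads) not_false
        · exact h
        · exact absurd (keyinj b a h ha.1 hab'.symm hheads.symm) not_false
      rw [Finset.card_image_of_injOn hinjON, hcnteq u]
      unfold Multigraph.degree
      exact le_rfl
  have hein : e ∈ univ.filter fun g => u ∈ G.ends g :=
    Finset.mem_filter.2 ⟨Finset.mem_univ _, by rw [hew]; exact Sym2.mem_mk_left _ _⟩
  rw [← himg] at hein
  obtain ⟨j, hjmem, hje⟩ := Finset.mem_image.1 hein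
  simp only [Finset.mem_filter, Finset.mem_range] at hjmem
  obtain ⟨hjN, hxj⟩ := hjmem
  have hje' : (σ (j+1)).1 ((σ j).2) = e := hje
  have hhead : (σ (j+1)).2 = w := by
    have h1 := hends j hjN
    rw [hje', hew, hxj] at h1
    exact (Sym2.congr_right.mp h1).symm
  refine ⟨j, ⟨hjN, hxj, hhead, ?_, hew⟩, ?_⟩
  · rw [← hxj]; exact hje'
  · rintro i ⟨hiN, hc⟩
    have hxi : (σ i).2 = u := hc.1
    have hheadi : (σ (i+1)).2 = w := hc.2.1
    have hedgei : (σ (i+1)).1 u = e := hc.2.2.1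
    have hEi : (σ (i+1)).1 ((σ i).2) = e := by rw [hxi]; exact hedgei
    rcases Nat.lt_trichotomy i j with h | h | h
    · exact absurd (keyinj i j h hjN (hEi.trans hje'.symm) (hheadi.trans hhead.symm)) not_false
    · exact h
    · exact absurd (keyinj j i h hiN (hje'.trans hEi.symm) (hhead.trans hheadi.symm)) not_false


end
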